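/- Let ψ ∈ Ω∞ and let κ ∈ 𝒦 have restricted growth with respect to ψ (κ ∈ R(ψ)). Then for every x ∈ M₊(ψ) the function φ_κ(x) is almost piecewise linear at infinity: L(φ_κ(x) − p({φ_κ(x)(n)}_{n≥1})) = 0 for every Banach limit L ∈ BL(ℝ₊). -/

import Mathlib

open MeasureTheory Filter Set

noncomputable section

/-- `f` is bounded and continuous on `[0,∞)`, i.e. (the restriction of) `f`
belongs to `C_b([0,∞))`. -/
def IsCb (f : ℝ → ℝ) : Prop :=
  ContinuousOn f (Ici 0) ∧ ∃ M : ℝ, ∀ t ∈ Ici (0:ℝ), |f t| ≤ M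

/-- Bounded real sequences, i.e. elements of `ℓ∞(ℕ)`. -/
def IsBddSeq (a : ℕ → ℝ) : Prop := ∃ M : ℝ, ∀ n, |a n| ≤ M

/-- A Banach limit on `C_b([0,∞))`: a positive linear translation-invariant
functional with `L(1) = 1`.  (The underlying map is defined on all of `ℝ → ℝ`;
the axioms only refer to its values on bounded continuous functions on `[0,∞)`.) -/
structure BanachLimitR where
  toFun : (ℝ → ℝ) → ℝ
  map_add : ∀ f g : ℝ → ℝ, IsCb f → IsCb g →
    toFun (fun t => f t + g t) = toFun f + toFun g
  map_smul : ∀ (c : ℝ) (f : ℝ → ℝ), IsCb f → toFun (fun t => c * f t) = c * toFun f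
  pos : ∀ f : ℝ → ℝ, IsCb f → (∀ t ∈ Ici (0:ℝ), 0 ≤ f t) → 0 ≤ toFun f
  map_one : toFun (fun _ => 1) = 1
  shift_inv : ∀ f : ℝ → ℝ, IsCb f → ∀ s : ℝ, 0 ≤ s → toFun (fun t => f (t + s)) = toFun f

/-- A Banach limit on `ℓ∞(ℕ)`: a positive linear shift-invariant functional
with `L'(1) = 1`. -/
structure BanachLimitN where
  toFun : (ℕ → ℝ) → ℝ
  map_add : ∀ a b : ℕ → ℝ, IsBddSeq a → IsBddSeq b →
    toFun (fun n => a n + b n) = toFun a + toFun b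
  map_smul : ∀ (c : ℝ) (a : ℕ → ℝ), IsBddSeq a → toFun (fun n => c * a n) = c * toFun a
  pos : ∀ a : ℕ → ℝ, IsBddSeq a → (∀ n, 0 ≤ a n) → 0 ≤ toFun a
  map_one : toFun (fun _ => 1) = 1
  shift_inv : ∀ a : ℕ → ℝ, IsBddSeq a → toFun (fun n => a (n + 1)) = toFun a

/-- An element of `SC_b^*([0,∞))`: a positive linear functional on `C_b([0,∞))`
with `γ(1) = 1` vanishing on `C₀([0,∞))`. -/
structure SCbStar where
  toFun : (ℝ → ℝ) → ℝ
  map_add : ∀ f g : ℝ → ℝ, IsCb f → IsCb g →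
    toFun (fun t => f t + g t) = toFun f + toFun g
  map_smul : ∀ (c : ℝ) (f : ℝ → ℝ), IsCb f → toFun (fun t => c * f t) = c * toFun f
  pos : ∀ f : ℝ → ℝ, IsCb f → (∀ t ∈ Ici (0:ℝ), 0 ≤ f t) → 0 ≤ toFun f
  map_one : toFun (fun _ => 1) = 1
  vanish : ∀ f : ℝ → ℝ, IsCb f → Tendsto f atTop (nhds 0) → toFun f = 0

/-- A positive linear functional on `C_b([0,∞))`. -/
structure PosLinFunc where
  toFun : (ℝ → ℝ) → ℝ
  map_add : ∀ f g : ℝ → ℝ, IsCb f → IsCb g →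
    toFun (fun t => f t + g t) = toFun f + toFun g
  map_smul : ∀ (c : ℝ) (f : ℝ → ℝ), IsCb f → toFun (fun t => c * f t) = c * toFun f
  pos : ∀ f : ℝ → ℝ, IsCb f → (∀ t ∈ Ici (0:ℝ), 0 ≤ f t) → 0 ≤ toFun f

/-- `ψ ∈ Ω_∞`: concave on `[0,∞)`, nonnegative, `ψ(t) → 0` as `t → 0⁺` and
`ψ(t) → ∞` as `t → ∞`. -/
def OmegaInf (ψ : ℝ → ℝ) : Prop :=
  ConcaveOn ℝ (Ici 0) ψ ∧ (∀ t ∈ Ici (0:ℝ), 0 ≤ ψ t) ∧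
    Tendsto ψ (nhdsWithin 0 (Ioi 0)) (nhds 0) ∧ Tendsto ψ atTop atTop

/-- The decreasing rearrangement `x*` of a measurable function `x` on `[0,∞)`. -/
def decRearr (x : ℝ → ℝ) (t : ℝ) : ℝ :=
  sInf {s : ℝ | 0 ≤ s ∧ volume {u : ℝ | 0 ≤ u ∧ s < |x u|} ≤ ENNReal.ofReal t}

/-- The weighted mean function `φ(x)(t) = (1/ψ(t)) ∫₀ᵗ x*(s) ds`. -/
def phiW (ψ x : ℝ → ℝ) (t : ℝ) : ℝ := (∫ s in (0:ℝ)..t, decRearr x s) / ψ t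

/-- Membership in the Marcinkiewicz space `M(ψ)`. -/
def MemM (ψ x : ℝ → ℝ) : Prop :=
  Measurable x ∧ ∃ M : ℝ, ∀ t > (0:ℝ), phiW ψ x t ≤ M

/-- Membership in the positive cone `M₊(ψ)`. -/
def MemMplus (ψ x : ℝ → ℝ) : Prop := MemM ψ x ∧ ∀ t ∈ Ici (0:ℝ), 0 ≤ x t

/-- The Marcinkiewicz norm `‖x‖_{M(ψ)} = sup_{t>0} φ(x)(t)`. -/
def MNorm (ψ x : ℝ → ℝ) : ℝ := ⨆ t > (0:ℝ), phiW ψ x t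

/-- `κ ∈ 𝒦`: strictly increasing, invertible (as a map of `[0,∞)` onto itself),
differentiable, unbounded, with `κ(0) = 0`. -/
def MemK (κ : ℝ → ℝ) : Prop :=
  StrictMonoOn κ (Ici 0) ∧ κ 0 = 0 ∧ MapsTo κ (Ici 0) (Ici 0) ∧
    SurjOn κ (Ici 0) (Ici 0) ∧ DifferentiableOn ℝ κ (Ici 0) ∧ Tendsto κ atTop atTop

/-- `f_{L,κ}(x) = L(φ_κ(x))` for a Banach limit `L` on `C_b([0,∞))`; the function
`φ_κ(x)`, bounded and continuous on `(0,∞)`, is fed to `L` as `t ↦ φ_κ(x)(max t 1)`. -/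
def fL (L : BanachLimitR) (ψ κ x : ℝ → ℝ) : ℝ :=
  L.toFun fun t => phiW ψ x (κ (max t 1))

/-- `f_{L',κ}(x) = L'({φ(x)(κ(n))}ₙ)` for a Banach limit `L'` on `ℓ∞(ℕ)`. -/
def fLN (L' : BanachLimitN) (ψ κ x : ℝ → ℝ) : ℝ :=
  L'.toFun fun n => phiW ψ x (κ n)

/-- `κ` has restricted growth with respect to `ψ` (`κ ∈ R(ψ)`): the sequence
`ψ(κ(n))/ψ(κ(n+1))` is almost convergent to `1`. -/
def RestrictedGrowth (ψ κ : ℝ → ℝ) : Prop :=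
  ∀ L' : BanachLimitN, L'.toFun (fun n => ψ (κ n) / ψ (κ ((n:ℝ) + 1))) = 1

/-- `κ` has dominated growth with respect to `ψ` (`κ ∈ D(ψ)`):
`(ψ∘κ)'(t)/(ψ∘κ)(t) < C/t` for some `C > 0` and all `t > 0`. -/
def DominatedGrowth (ψ κ : ℝ → ℝ) : Prop :=
  (∀ t > (0:ℝ), DifferentiableAt ℝ (fun u => ψ (κ u)) t) ∧
    ∃ C > (0:ℝ), ∀ t > (0:ℝ), deriv (fun u => ψ (κ u)) t / ψ (κ t) < C / t

/-- `κ` is of exponential increase: `κ(t + C) > 2κ(t)` for some `C > 0` and all `t > 0`. -/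
def ExpIncrease (κ : ℝ → ℝ) : Prop := ∃ C > (0:ℝ), ∀ t > (0:ℝ), 2 * κ t < κ (t + C)

/-- The piecewise linear extension map `p : ℓ∞(ℕ) → C_b([0,∞))`. -/
def plExt (a : ℕ → ℝ) (t : ℝ) : ℝ :=
  a ⌊t⌋₊ + (a (⌊t⌋₊ + 1) - a ⌊t⌋₊) * (t - (⌊t⌋₊ : ℝ))

/-- The Cesàro mean `C(g)(μ) = (1/μ) ∫₀^μ g(s) ds` (with `C(g)(0) := g(0)`). -/
def cesaro (g : ℝ → ℝ) (μ : ℝ) : ℝ :=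
  if μ = 0 then g 0 else (∫ s in (0:ℝ)..μ, g s) / μ

/-- `M_k(g)(λ) = (1/k(λ)) ∫₀^λ g(s) k'(s) ds` (with `M_k(g)(0) := g(0)`). -/
def MkFun (k g : ℝ → ℝ) (l : ℝ) : ℝ :=
  if l = 0 then g 0 else (∫ s in (0:ℝ)..l, g s * deriv k s) / k l

/-- The Connes-Dixmier functional `τ_{γ,k}(x) = γ(M_k(φ(x)))`; the function
`M_k(φ(x))`, bounded and continuous on `(0,∞)`, is fed to `γ` as `t ↦ M_k(φ(x))(max t 1)`. -/
def tauCD (γ : SCbStar) (ψ k x : ℝ → ℝ) : ℝ :=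
  γ.toFun fun t => MkFun k (phiW ψ x) (max t 1)

/-- A set `Λ` of Banach limits has the Cesàro limit property if for each
`g ∈ C_b([0,∞))` both `liminf C(g)` and `limsup C(g)` are attained as values `L(g)`, `L ∈ Λ`. -/
def CesaroLimitProp (Λ : Set BanachLimitR) : Prop :=
  ∀ g : ℝ → ℝ, IsCb g →
    (∃ L ∈ Λ, L.toFun g = liminf (cesaro g) atTop) ∧
    (∃ L ∈ Λ, L.toFun g = limsup (cesaro g) atTop)

/-- Dilation invariance of an element of `SC_b^*([0,∞))`. -/
def DilationInvariant (ω : SCbStar) : Prop :=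
  ∀ g : ℝ → ℝ, IsCb g → ∀ a : ℝ, 0 < a → ω.toFun (fun t => g (a * t)) = ω.toFun g

namespace APL

lemma plExt_eq_on (b : ℕ → ℝ) (n : ℕ) {t : ℝ} (ht : (n:ℝ) ≤ t) (ht' : t ≤ (n:ℝ)+1) :
    plExt b t = b n + (b (n+1) - b n) * (t - n) := by
  rcases lt_or_eq_of_le ht' with h | h
  · have hfl : ⌊t⌋₊ = n := by
      rw [Nat.floor_eq_iff (le_trans (Nat.cast_nonneg n) ht)]
      exact ⟨ht, h⟩
    simp [plExt, hfl]
  · have hfl : ⌊t⌋₊ = n + 1 := by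
      rw [h]
      rw [show (n:ℝ) + 1 = ((n+1 : ℕ) : ℝ) by push_cast; ring, Nat.floor_natCast]
    rw [plExt, hfl, h]
    push_cast
    ring

lemma continuous_plExt (b : ℕ → ℝ) : Continuous (plExt b) := by
  rw [continuous_iff_continuousAt]
  intro t₀
  by_cases h1 : t₀ < 1
  · have heq : ∀ t : ℝ, t < 1 → plExt b t = b 0 + (b 1 - b 0) * (t - 0) := by
      intro t ht
      have : ⌊t⌋₊ = 0 := Nat.floor_eq_zero.mpr ht
      simp [plExt, this]
    have hc : ContinuousAt (fun t : ℝ => b 0 + (b 1 - b 0) * (t - 0)) t₀ := by fun_prop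
    apply hc.congr
    filter_upwards [eventually_lt_nhds h1] with t ht using (heq t ht).symm
  · push_neg at h1
    have ht0 : (0:ℝ) ≤ t₀ := le_trans zero_le_one h1
    set n := ⌊t₀⌋₊ with hn
    have hn1 : 1 ≤ n := by
      have := Nat.one_le_floor_iff t₀
      exact this.mpr h1
    have hnle : (n:ℝ) ≤ t₀ := Nat.floor_le ht0
    have hltn1 : t₀ < (n:ℝ) + 1 := Nat.lt_floor_add_one t₀
    have haff : ∀ (m : ℕ) (s : Set ℝ), ContinuousWithinAt (fun t : ℝ => b m + (b (m+1) - b m) * (t - (m:ℝ))) s t₀ := by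
      intro m s
      exact (by fun_prop : Continuous (fun t : ℝ => b m + (b (m+1) - b m) * (t - (m:ℝ)))).continuousWithinAt
    have hr : ContinuousWithinAt (plExt b) (Ici t₀) t₀ := by
      apply ContinuousWithinAt.congr_of_eventuallyEq (haff n _)
      · filter_upwards [inter_mem_nhdsWithin (Ici t₀) (Iio_mem_nhds hltn1 : Iio ((n:ℝ)+1) ∈ nhds t₀)] with t ht
        exact plExt_eq_on b n (le_trans hnle ht.1) (le_of_lt ht.2)
      · exact plExt_eq_on b n hnle (le_of_lt hltn1)
    have hl : ContinuousWithinAt (plExt b) (Iic t₀) t₀ := by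
      rcases eq_or_lt_of_le hnle with heq | hlt
      · -- t₀ = n, use interval [n-1, n]
        have hcast : ((n - 1 : ℕ) : ℝ) = (n:ℝ) - 1 := by
          rw [Nat.cast_sub hn1]; simp
        apply ContinuousWithinAt.congr_of_eventuallyEq (haff (n-1) _)
        · filter_upwards [inter_mem_nhdsWithin (Iic t₀)
            (Ioi_mem_nhds (by linarith) : Ioi ((n:ℝ)-1) ∈ nhds t₀)] with t ht
          obtain ⟨ht1, ht2⟩ := ht
          rw [mem_Iic] at ht1
          rw [mem_Ioi] at ht2
          have h1' : ((n-1:ℕ):ℝ) ≤ t := by rw [hcast]; linarith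
          have h2' : t ≤ ((n-1:ℕ):ℝ) + 1 := by rw [hcast]; linarith
          rw [plExt_eq_on b (n-1) h1' h2']
        · have h1' : ((n-1:ℕ):ℝ) ≤ t₀ := by rw [hcast]; linarith
          have h2' : t₀ ≤ ((n-1:ℕ):ℝ) + 1 := by rw [hcast, ← heq]; linarith
          rw [plExt_eq_on b (n-1) h1' h2']
      · apply ContinuousWithinAt.congr_of_eventuallyEq (haff n _)
        · filter_upwards [inter_mem_nhdsWithin (Iic t₀) (Ioi_mem_nhds hlt : Ioi (n:ℝ) ∈ nhds t₀)] with t ht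
          exact plExt_eq_on b n (le_of_lt ht.2) (le_trans ht.1 (le_of_lt hltn1))
        · exact plExt_eq_on b n hnle (le_of_lt hltn1)
    have := hl.union hr
    rw [Iic_union_Ici, continuousWithinAt_univ] at this
    exact this

lemma plExt_combo (b : ℕ → ℝ) {t : ℝ} (ht : 0 ≤ t) :
    plExt b t = (1 - (t - (⌊t⌋₊:ℝ))) * b ⌊t⌋₊ + (t - (⌊t⌋₊:ℝ)) * b (⌊t⌋₊ + 1) := by
  rw [plExt]; ring

lemma frac_nonneg {t : ℝ} (ht : 0 ≤ t) : 0 ≤ t - (⌊t⌋₊:ℝ) := by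
  have := Nat.floor_le ht; linarith

lemma frac_lt_one (t : ℝ) : t - (⌊t⌋₊:ℝ) < 1 := by
  have := Nat.lt_floor_add_one t; linarith

lemma plExt_nonneg {b : ℕ → ℝ} (hb : ∀ n, 0 ≤ b n) {t : ℝ} (ht : 0 ≤ t) : 0 ≤ plExt b t := by
  rw [plExt_combo b ht]
  have h1 := frac_nonneg ht
  have h2 := le_of_lt (frac_lt_one t)
  have := hb ⌊t⌋₊; have := hb (⌊t⌋₊ + 1)
  nlinarith

lemma plExt_abs_le {b : ℕ → ℝ} {M : ℝ} (hb : ∀ n, |b n| ≤ M) {t : ℝ} (ht : 0 ≤ t) :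
    |plExt b t| ≤ M := by
  rw [plExt_combo b ht]
  have h1 := frac_nonneg ht
  have h2 := le_of_lt (frac_lt_one t)
  have hb1 := abs_le.mp (hb ⌊t⌋₊); have hb2 := abs_le.mp (hb (⌊t⌋₊ + 1))
  rw [abs_le]; constructor <;> nlinarith

lemma plExt_add (b c : ℕ → ℝ) (t : ℝ) :
    plExt (fun n => b n + c n) t = plExt b t + plExt c t := by
  simp only [plExt]; ring

lemma plExt_smul (c : ℝ) (b : ℕ → ℝ) (t : ℝ) :
    plExt (fun n => c * b n) t = c * plExt b t := by
  simp only [plExt]; ring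

lemma plExt_const (c : ℝ) (t : ℝ) : plExt (fun _ => c) t = c := by
  simp [plExt]

lemma plExt_succ (b : ℕ → ℝ) {t : ℝ} (ht : 0 ≤ t) :
    plExt (fun n => b (n+1)) t = plExt b (t + 1) := by
  rw [plExt, plExt, Nat.floor_add_one ht]
  push_cast
  ring


/-! ### IsCb lemmas -/

lemma IsCbConst (c : ℝ) : IsCb (fun _ => c) :=
  ⟨continuousOn_const, ⟨|c|, fun _ _ => le_refl _⟩⟩

lemma IsCbAdd {f g : ℝ → ℝ} (hf : IsCb f) (hg : IsCb g) : IsCb (fun t => f t + g t) := by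
  obtain ⟨hfc, Mf, hMf⟩ := hf; obtain ⟨hgc, Mg, hMg⟩ := hg
  exact ⟨hfc.add hgc, ⟨Mf + Mg, fun t ht =>
    le_trans (abs_add_le _ _) (add_le_add (hMf t ht) (hMg t ht))⟩⟩

lemma IsCbSub {f g : ℝ → ℝ} (hf : IsCb f) (hg : IsCb g) : IsCb (fun t => f t - g t) := by
  obtain ⟨hfc, Mf, hMf⟩ := hf; obtain ⟨hgc, Mg, hMg⟩ := hg
  exact ⟨hfc.sub hgc, ⟨Mf + Mg, fun t ht =>
    le_trans (abs_sub _ _) (add_le_add (hMf t ht) (hMg t ht))⟩⟩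

lemma IsCbSmul {f : ℝ → ℝ} (c : ℝ) (hf : IsCb f) : IsCb (fun t => c * f t) := by
  obtain ⟨hfc, Mf, hMf⟩ := hf
  refine ⟨(continuousOn_const).mul hfc, ⟨|c| * Mf, fun t ht => ?_⟩⟩
  rw [abs_mul]
  exact mul_le_mul_of_nonneg_left (hMf t ht) (abs_nonneg c)

lemma IsCbShift {f : ℝ → ℝ} (hf : IsCb f) {s : ℝ} (hs : 0 ≤ s) : IsCb (fun t => f (t + s)) := by
  obtain ⟨hfc, Mf, hMf⟩ := hf
  constructor
  · have hcont : ContinuousOn (fun t : ℝ => t + s) (Ici 0) :=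
      (continuous_id.add continuous_const).continuousOn
    have hmaps : MapsTo (fun t : ℝ => t + s) (Ici 0) (Ici 0) := fun t ht => by
      simp only [mem_Ici] at *; linarith
    exact hfc.comp hcont hmaps
  · exact ⟨Mf, fun t ht => hMf (t+s) (by simp only [mem_Ici] at *; linarith)⟩

/-! ### Banach limit (real) lemmas -/

section BLR
variable (L : BanachLimitR)

lemma BL_const (c : ℝ) : L.toFun (fun _ => c) = c := by
  have h := L.map_smul c (fun _ => 1) (IsCbConst 1)
  have h2 : (fun t : ℝ => c * (1:ℝ)) = (fun _ : ℝ => c) := by funext t; ring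
  rw [h2] at h
  rw [h, L.map_one, mul_one]

lemma BL_sub {f g : ℝ → ℝ} (hf : IsCb f) (hg : IsCb g) :
    L.toFun (fun t => f t - g t) = L.toFun f - L.toFun g := by
  have hng : IsCb (fun t => (-1) * g t) := IsCbSmul (-1) hg
  have h1 : (fun t => f t - g t) = (fun t => f t + (-1) * g t) := by funext t; ring
  rw [h1, L.map_add f _ hf hng, L.map_smul (-1) g hg]
  ring

lemma BL_mono {f g : ℝ → ℝ} (hf : IsCb f) (hg : IsCb g)
    (h : ∀ t ∈ Ici (0:ℝ), f t ≤ g t) : L.toFun f ≤ L.toFun g := by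
  have hp := L.pos (fun t => g t - f t) (IsCbSub hg hf)
    (fun t ht => by show (0:ℝ) ≤ g t - f t; linarith [h t ht])
  rw [BL_sub L hg hf] at hp
  linarith

lemma BL_congr {f g : ℝ → ℝ} (hf : IsCb f) (hg : IsCb g)
    (h : ∀ t ∈ Ici (0:ℝ), f t = g t) : L.toFun f = L.toFun g :=
  le_antisymm (BL_mono L hf hg (fun t ht => (h t ht).le))
    (BL_mono L hg hf (fun t ht => (h t ht).ge))

lemma BL_congr_Ici {f g : ℝ → ℝ} (hf : IsCb f) (hg : IsCb g) {s : ℝ} (hs : 0 ≤ s)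
    (h : ∀ t, s ≤ t → f t = g t) : L.toFun f = L.toFun g := by
  rw [← L.shift_inv f hf s hs, ← L.shift_inv g hg s hs]
  exact BL_congr L (IsCbShift hf hs) (IsCbShift hg hs)
    (fun t (ht : t ∈ Ici (0:ℝ)) => h (t + s) (by simp only [mem_Ici] at ht; linarith))

end BLR

/-! ### Banach limit (sequence) lemmas -/

section BLN
variable (Ln : BanachLimitN)

lemma BddConst (c : ℝ) : IsBddSeq (fun _ => c) := ⟨|c|, fun _ => le_refl _⟩

lemma BddAdd {b c : ℕ → ℝ} (hb : IsBddSeq b) (hc : IsBddSeq c) :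
    IsBddSeq (fun n => b n + c n) := by
  obtain ⟨Mb, hMb⟩ := hb; obtain ⟨Mc, hMc⟩ := hc
  exact ⟨Mb + Mc, fun n => le_trans (abs_add_le _ _) (add_le_add (hMb n) (hMc n))⟩

lemma BddSub {b c : ℕ → ℝ} (hb : IsBddSeq b) (hc : IsBddSeq c) :
    IsBddSeq (fun n => b n - c n) := by
  obtain ⟨Mb, hMb⟩ := hb; obtain ⟨Mc, hMc⟩ := hc
  exact ⟨Mb + Mc, fun n => le_trans (abs_sub _ _) (add_le_add (hMb n) (hMc n))⟩

lemma BddSmul (c : ℝ) {b : ℕ → ℝ} (hb : IsBddSeq b) : IsBddSeq (fun n => c * b n) := by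
  obtain ⟨Mb, hMb⟩ := hb
  exact ⟨|c| * Mb, fun n => by rw [abs_mul]; exact mul_le_mul_of_nonneg_left (hMb n) (abs_nonneg c)⟩

lemma BddComp {b : ℕ → ℝ} (hb : IsBddSeq b) (m : ℕ → ℕ) : IsBddSeq (fun n => b (m n)) := by
  obtain ⟨Mb, hMb⟩ := hb
  exact ⟨Mb, fun n => hMb (m n)⟩

lemma BLN_const (c : ℝ) : Ln.toFun (fun _ => c) = c := by
  have h := Ln.map_smul c (fun _ => 1) (BddConst 1)
  have h2 : (fun _ : ℕ => c * (1:ℝ)) = (fun _ : ℕ => c) := by funext n; ring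
  rw [h2] at h
  rw [h, Ln.map_one, mul_one]

lemma BLN_sub {b c : ℕ → ℝ} (hb : IsBddSeq b) (hc : IsBddSeq c) :
    Ln.toFun (fun n => b n - c n) = Ln.toFun b - Ln.toFun c := by
  have h1 : (fun n => b n - c n) = (fun n => b n + (-1) * c n) := by funext n; ring
  rw [h1, Ln.map_add b _ hb (BddSmul (-1) hc), Ln.map_smul (-1) c hc]
  ring

lemma BLN_mono {b c : ℕ → ℝ} (hb : IsBddSeq b) (hc : IsBddSeq c)
    (h : ∀ n, b n ≤ c n) : Ln.toFun b ≤ Ln.toFun c := by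
  have hp := Ln.pos (fun n => c n - b n) (BddSub hc hb)
    (fun n => by show (0:ℝ) ≤ c n - b n; linarith [h n])
  rw [BLN_sub Ln hc hb] at hp
  linarith

end BLN

/-! ### psi lemmas -/

lemma psi_mono {ψ : ℝ → ℝ} (hψ : OmegaInf ψ) : MonotoneOn ψ (Ici 0) := by
  rintro p hp q hq hpq
  rcases eq_or_lt_of_le hpq with rfl | hlt
  · exact le_refl _
  by_contra hcon
  push_neg at hcon
  obtain ⟨t, ht1, ht2⟩ : ∃ t, q < t ∧ ψ p ≤ ψ t := by
    have h1 := (hψ.2.2.2.eventually_ge_atTop (ψ p)).and (eventually_gt_atTop q)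
    obtain ⟨t, h⟩ := h1.exists
    exact ⟨t, h.2, h.1⟩
  simp only [mem_Ici] at hp hq
  have h0 : 0 < t - p := by linarith
  have hμ : 0 ≤ (t - q)/(t - p) := by apply div_nonneg <;> linarith
  have hν : 0 ≤ (q - p)/(t - p) := by
    apply div_nonneg <;> linarith
  have hsum : (t - q)/(t - p) + (q - p)/(t - p) = 1 := by field_simp; ring
  have hcomb := hψ.1.2 (mem_Ici.mpr hp) (mem_Ici.mpr (by linarith : (0:ℝ) ≤ t)) hμ hν hsum
  have harg : ((t - q)/(t - p)) • p + ((q - p)/(t - p)) • t = q := by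
    simp only [smul_eq_mul]
    field_simp
    ring
  rw [harg] at hcomb
  simp only [smul_eq_mul] at hcomb
  have key : 0 ≤ ((q - p)/(t - p)) * (ψ t - ψ p) := mul_nonneg hν (by linarith)
  have e : (t - q)/(t - p) * ψ p + (q - p)/(t - p) * ψ p = ψ p := by
    rw [← add_mul, hsum, one_mul]
  nlinarith

lemma psi_pos {ψ : ℝ → ℝ} (hψ : OmegaInf ψ) {s : ℝ} (hs : 0 < s) : 0 < ψ s := by
  obtain ⟨T, hT1, hT2⟩ : ∃ T, max s 1 ≤ T ∧ 1 ≤ ψ T := by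
    have h1 := (hψ.2.2.2.eventually_ge_atTop 1).and (eventually_ge_atTop (max s 1))
    obtain ⟨T, h⟩ := h1.exists
    exact ⟨T, h.2, h.1⟩
  have hsT : s ≤ T := le_trans (le_max_left _ _) hT1
  have hT0 : 0 < T := lt_of_lt_of_le (lt_of_lt_of_le zero_lt_one (le_max_right s 1)) hT1
  have hlam1 : 0 ≤ 1 - s / T := by
    have : s / T ≤ 1 := (div_le_one hT0).mpr hsT
    linarith
  have hlam2 : 0 < s / T := div_pos hs hT0
  have hsum' : (1 - s/T) + s/T = 1 := by ring
  have hcomb := hψ.1.2 (mem_Ici.mpr (le_refl (0:ℝ))) (mem_Ici.mpr hT0.le) hlam1 hlam2.le hsum'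
  have harg : ((1 - s/T):ℝ) • (0:ℝ) + ((s/T):ℝ) • T = s := by
    simp only [smul_eq_mul]
    field_simp
    ring
  rw [harg] at hcomb
  simp only [smul_eq_mul] at hcomb
  have hψ0 : 0 ≤ ψ 0 := hψ.2.1 0 (mem_Ici.mpr (le_refl _))
  nlinarith

/-! ### decreasing rearrangement lemmas -/

lemma decRearr_nonneg (x : ℝ → ℝ) (t : ℝ) : 0 ≤ decRearr x t :=
  Real.sInf_nonneg (fun _ hs => hs.1)


/-! ### degenerate case -/

lemma degenerate_case (ψ κ x : ℝ → ℝ) (hκ0 : κ 0 = 0) (hκnn : ∀ t, 0 ≤ t → 0 ≤ κ t)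
    (hF : ∀ e, 0 ≤ e → (∫ s in (0:ℝ)..e, decRearr x s) = 0) (L : BanachLimitR) :
    L.toFun (fun t =>
      phiW ψ x (κ (max t 1)) - plExt (fun n => phiW ψ x (κ (n:ℝ))) (max t 1)) = 0 := by
  have hzero : ∀ T, 0 ≤ T → phiW ψ x (κ T) = 0 := by
    intro T hT
    unfold phiW
    rw [hF _ (hκnn T hT), zero_div]
  have hfun : (fun t => phiW ψ x (κ (max t 1)) -
      plExt (fun n => phiW ψ x (κ (n:ℝ))) (max t 1)) = (fun _ : ℝ => (0:ℝ)) := by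
    funext t
    rw [hzero _ (le_trans zero_le_one (le_max_right t 1))]
    simp only [plExt]
    rw [hzero ((⌊max t 1⌋₊ : ℝ)) (Nat.cast_nonneg _),
      hzero (((⌊max t 1⌋₊ + 1 : ℕ) : ℝ)) (Nat.cast_nonneg _)]
    ring
  rw [hfun]
  exact BL_const L 0

/-! ### measure lemma -/

lemma measure_tail_small {x : ℝ → ℝ} (hxm : Measurable x) {s₀ : ℝ} (hs₀ : 0 ≤ s₀)
    (hfin : volume {u : ℝ | 0 ≤ u ∧ s₀ < |x u|} ≠ ⊤) {τ : ℝ} (hτ : 0 < τ) :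
    ∃ s : ℝ, 0 ≤ s ∧ volume {u : ℝ | 0 ≤ u ∧ s < |x u|} ≤ ENNReal.ofReal τ := by
  set A : ℕ → Set ℝ := fun k => {u : ℝ | 0 ≤ u ∧ s₀ + k < |x u|} with hA
  have hmeas : ∀ k : ℕ, NullMeasurableSet (A k) volume := by
    intro k
    apply MeasurableSet.nullMeasurableSet
    have : A k = {u : ℝ | 0 ≤ u} ∩ (fun u => |x u|) ⁻¹' (Ioi (s₀ + k)) := by
      ext u; simp [hA, and_comm]
    rw [this]
    exact (measurableSet_Ici).inter (hxm.abs measurableSet_Ioi)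
  have hanti : Antitone A := by
    intro k l hkl u hu
    refine ⟨hu.1, lt_of_le_of_lt ?_ hu.2⟩
    have : (k:ℝ) ≤ l := Nat.cast_le.mpr hkl
    linarith
  have hempty : ⋂ k, A k = ∅ := by
    ext u
    simp only [mem_iInter, mem_empty_iff_false, iff_false]
    intro h
    obtain ⟨k, hk⟩ := exists_nat_gt (|x u| - s₀)
    exact absurd (h k).2 (by linarith)
  have htend := MeasureTheory.tendsto_measure_iInter_atTop hmeas hanti
    ⟨0, by rw [hA]; simpa using hfin⟩
  rw [hempty] at htend
  simp only [measure_empty] at htend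
  obtain ⟨k, hk⟩ := (htend.eventually_lt_const (ENNReal.ofReal_pos.mpr hτ)).exists
  exact ⟨s₀ + k, by positivity, hk.le⟩


lemma intervalIntegrable_all {f : ℝ → ℝ} (hconst : ∀ t, t ≤ 0 → f t = f 0)
    (hpos : ∀ q, 0 ≤ q → IntervalIntegrable f volume 0 q) (p q : ℝ) :
    IntervalIntegrable f volume p q := by
  have hneg : ∀ p, p ≤ 0 → IntervalIntegrable f volume p 0 := by
    intro p hp
    have hc : IntervalIntegrable (fun _ : ℝ => f 0) volume p 0 := intervalIntegrable_const
    rw [intervalIntegrable_iff_integrableOn_Ioc_of_le hp] at hc ⊢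
    exact hc.congr_fun (fun t ht => (hconst t ht.2).symm) measurableSet_Ioc
  have key : ∀ p q, p ≤ q → IntervalIntegrable f volume p q := by
    intro p q hpq
    rcases le_total 0 p with h0 | h0
    · have h2 : IntervalIntegrable f volume 0 q := hpos q (le_trans h0 hpq)
      apply h2.mono_set
      apply uIcc_subset_uIcc _ right_mem_uIcc
      rw [uIcc_of_le (le_trans h0 hpq)]
      exact ⟨h0, hpq⟩
    · rcases le_total 0 q with h1 | h1
      · exact (hneg p h0).trans (hpos q h1)
      · have h2 := hneg p h0
        apply h2.mono_set
        apply uIcc_subset_uIcc left_mem_uIcc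
        rw [uIcc_of_le h0]
        exact ⟨hpq, h1⟩
  rcases le_total p q with h | h
  · exact key p q h
  · exact (key q p h).symm

set_option maxHeartbeats 1000000 in
theorem main (ψ κ : ℝ → ℝ) (hψ : OmegaInf ψ)
    (hκ : MemK κ) (hR : RestrictedGrowth ψ κ)
    (x : ℝ → ℝ) (hx : MemMplus ψ x) (L : BanachLimitR) :
    L.toFun (fun t =>
      phiW ψ x (κ (max t 1)) - plExt (fun n => phiW ψ x (κ (n:ℝ))) (max t 1)) = 0 := by
  classical
  obtain ⟨⟨hxmeas, M₀, hM₀⟩, hxpos⟩ := hx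
  have hκmono : StrictMonoOn κ (Ici 0) := hκ.1
  have hκ0 : κ 0 = 0 := hκ.2.1
  have hκpos : ∀ t, 0 < t → 0 < κ t := by
    intro t ht
    have := hκmono (mem_Ici.mpr (le_refl 0)) (mem_Ici.mpr ht.le) ht
    rwa [hκ0] at this
  have hκnn : ∀ t, 0 ≤ t → 0 ≤ κ t := by
    intro t ht
    rcases eq_or_lt_of_le ht with rfl | h
    · exact le_of_eq hκ0.symm
    · exact (hκpos t h).le
  by_cases hS : ∀ τ : ℝ, 0 < τ →
      ∃ s : ℝ, 0 ≤ s ∧ volume {u : ℝ | 0 ≤ u ∧ s < |x u|} ≤ ENNReal.ofReal τ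
  · -- S_τ nonempty for all τ > 0
    have hanti : AntitoneOn (decRearr x) (Ioi 0) := by
      intro p hp q hq hpq
      simp only [decRearr]
      apply csInf_le_csInf
      · exact ⟨0, fun s hs => hs.1⟩
      · obtain ⟨s, h1, h2⟩ := hS p hp
        exact ⟨s, h1, h2⟩
      · intro s hs
        exact ⟨hs.1, le_trans hs.2 (ENNReal.ofReal_le_ofReal hpq)⟩
    have hIntMid : ∀ δ c : ℝ, 0 < δ → δ ≤ c → IntervalIntegrable (decRearr x) volume δ c := by
      intro δ c hδ hδc
      set y : ℝ → ℝ := fun t => decRearr x (max t δ) with hy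
      have hym : Antitone y := by
        intro p q hpq
        exact hanti (mem_Ioi.mpr (lt_of_lt_of_le hδ (le_max_right p δ)))
          (mem_Ioi.mpr (lt_of_lt_of_le hδ (le_max_right q δ)))
          (max_le_max hpq (le_refl δ))
      rw [intervalIntegrable_iff_integrableOn_Ioc_of_le hδc]
      have hyint : IntegrableOn y (Ioc δ c) volume := by
        apply MeasureTheory.Integrable.mono'
          (integrableOn_const measure_Ioc_lt_top.ne : IntegrableOn (fun _ => y δ) (Ioc δ c) volume)
          (hym.measurable.aestronglyMeasurable.restrict)
        filter_upwards [MeasureTheory.ae_restrict_mem measurableSet_Ioc] with u hu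
        rw [Real.norm_eq_abs, abs_of_nonneg (decRearr_nonneg x _)]
        exact hym hu.1.le
      apply hyint.congr_fun _ measurableSet_Ioc
      intro u hu
      simp only [hy]
      rw [max_eq_left hu.1.le]
    by_cases hInt : ∀ c : ℝ, 0 < c → IntervalIntegrable (decRearr x) volume 0 c
    · -- MAIN CASE
      have hxstar0 : ∀ t : ℝ, t ≤ 0 → decRearr x t = decRearr x 0 := by
        intro t ht
        simp only [decRearr]
        rw [ENNReal.ofReal_of_nonpos ht, ENNReal.ofReal_zero]
      have hIntAll : ∀ p q : ℝ, IntervalIntegrable (decRearr x) volume p q := by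
        apply intervalIntegrable_all hxstar0
        intro q hq
        rcases eq_or_lt_of_le hq with rfl | h
        · rw [intervalIntegrable_iff_integrableOn_Ioc_of_le le_rfl, Ioc_self]
          exact integrableOn_empty
        · exact hInt q h
      set F : ℝ → ℝ := fun e => ∫ s in (0:ℝ)..e, decRearr x s with hFdef
      have hFcont : Continuous F := intervalIntegral.continuous_primitive hIntAll 0
      have hFnn : ∀ e, 0 ≤ e → 0 ≤ F e := fun e he =>
        intervalIntegral.integral_nonneg he (fun v _ => decRearr_nonneg x v)
      have hFmono : ∀ p q, 0 ≤ p → p ≤ q → F p ≤ F q := by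
        intro p q hp hpq
        have hsplit : F p + (∫ s in p..q, decRearr x s) = F q :=
          intervalIntegral.integral_add_adjacent_intervals (hIntAll 0 p) (hIntAll p q)
        have h2 : 0 ≤ ∫ s in p..q, decRearr x s :=
          intervalIntegral.integral_nonneg hpq (fun v _ => decRearr_nonneg x v)
        linarith
      have hψconc : ConcaveOn ℝ (Ioi 0) ψ := hψ.1.subset Ioi_subset_Ici_self (convex_Ioi 0)
      have hψcont : ContinuousOn ψ (Ioi 0) := by
        have hconv : ConvexOn ℝ (Ioi 0) (fun t => -ψ t) := hψconc.neg
        have h1 : ContinuousOn (fun t => -ψ t) (Ioi 0) := hconv.continuousOn isOpen_Ioi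
        have h2 : ContinuousOn (fun t => -(-ψ t)) (Ioi 0) := h1.neg
        simpa using h2
      set M : ℝ := max M₀ 0 with hMdef
      have hMnn : 0 ≤ M := le_max_right _ _
      have hphiM : ∀ T, 0 < T → phiW ψ x T ≤ M := fun T hT =>
        le_trans (hM₀ T hT) (le_max_left _ _)
      have hψnn : ∀ T, 0 ≤ T → 0 ≤ ψ T := fun T hT => hψ.2.1 T (mem_Ici.mpr hT)
      have hphinn : ∀ T, 0 ≤ T → 0 ≤ phiW ψ x T := by
        intro T hT
        exact div_nonneg (hFnn T hT) (hψnn T hT)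
      set a : ℕ → ℝ := fun n => phiW ψ x (κ (n:ℝ)) with haDef
      set r : ℕ → ℝ := fun n => ψ (κ (n:ℝ)) / ψ (κ ((n:ℝ)+1)) with hrDef
      have ha0 : a 0 = 0 := by
        rw [haDef]
        simp only [Nat.cast_zero]
        rw [hκ0]
        unfold phiW
        rw [intervalIntegral.integral_same, zero_div]
      have hann : ∀ n, 0 ≤ a n := fun n => hphinn _ (hκnn _ (Nat.cast_nonneg n))
      have haM : ∀ n, a n ≤ M := by
        intro n
        rcases Nat.eq_zero_or_pos n with rfl | hn
        · rw [ha0]; exact hMnn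
        · exact hphiM _ (hκpos _ (by exact_mod_cast hn))
      have hrnn : ∀ n, 0 ≤ r n := fun n =>
        div_nonneg (hψnn _ (hκnn _ (Nat.cast_nonneg n))) (hψnn _ (hκnn _ (by positivity)))
      have hψκpos : ∀ n : ℕ, 0 < ψ (κ ((n:ℝ)+1)) := fun n => psi_pos hψ (hκpos _ (by positivity))
      have hψκmono : ∀ s t : ℝ, 0 ≤ s → s ≤ t → ψ (κ s) ≤ ψ (κ t) := by
        intro s t hs hst
        exact psi_mono hψ (mem_Ici.mpr (hκnn s hs)) (mem_Ici.mpr (hκnn t (le_trans hs hst)))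
          (hκmono.monotoneOn (mem_Ici.mpr hs) (mem_Ici.mpr (le_trans hs hst)) hst)
      have hr1 : ∀ n, r n ≤ 1 := by
        intro n
        rw [hrDef]
        simp only
        rw [div_le_one (hψκpos n)]
        exact hψκmono (n:ℝ) ((n:ℝ)+1) (Nat.cast_nonneg n) (by linarith)
      set u : ℕ → ℝ := fun n => min (a (n+1) / r n - a n * r n) (2*M) with huDef
      set d : ℕ → ℝ := fun n => u (n-1) + u n with hdDef
      have hKey : ∀ n : ℕ, 1 ≤ n → ∀ T : ℝ, (n:ℝ) ≤ T → T ≤ (n:ℝ)+1 →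
          a n * r n ≤ phiW ψ x (κ T) ∧ phiW ψ x (κ T) ≤ a (n+1) / r n ∧
          a n * r n ≤ a n ∧ a n ≤ a (n+1) / r n ∧ a n * r n ≤ a (n+1) ∧
          a (n+1) ≤ a (n+1) / r n := by
        intro n hn T hT1 hT2
        have hn0 : (0:ℝ) < (n:ℝ) := by exact_mod_cast hn
        have hT0 : 0 < T := lt_of_lt_of_le hn0 hT1
        have hκn : 0 < κ (n:ℝ) := hκpos _ hn0
        have hκT : 0 < κ T := hκpos _ hT0
        have hκn1 : 0 < κ ((n:ℝ)+1) := hκpos _ (by linarith)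
        have hp1 : 0 < ψ (κ (n:ℝ)) := psi_pos hψ hκn
        have hp2 : 0 < ψ (κ ((n:ℝ)+1)) := psi_pos hψ hκn1
        have hpT : 0 < ψ (κ T) := psi_pos hψ hκT
        have hκm1 : κ (n:ℝ) ≤ κ T :=
          hκmono.monotoneOn (mem_Ici.mpr hn0.le) (mem_Ici.mpr hT0.le) hT1
        have hκm2 : κ T ≤ κ ((n:ℝ)+1) :=
          hκmono.monotoneOn (mem_Ici.mpr hT0.le) (mem_Ici.mpr (by linarith)) hT2
        have hψm1 : ψ (κ (n:ℝ)) ≤ ψ (κ T) :=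
          psi_mono hψ (mem_Ici.mpr hκn.le) (mem_Ici.mpr hκT.le) hκm1
        have hψm2 : ψ (κ T) ≤ ψ (κ ((n:ℝ)+1)) :=
          psi_mono hψ (mem_Ici.mpr hκT.le) (mem_Ici.mpr hκn1.le) hκm2
        have hF1 : F (κ (n:ℝ)) ≤ F (κ T) := hFmono _ _ hκn.le hκm1
        have hF2 : F (κ T) ≤ F (κ ((n:ℝ)+1)) := hFmono _ _ hκT.le hκm2
        have hFn : 0 ≤ F (κ (n:ℝ)) := hFnn _ hκn.le
        have hFn1 : 0 ≤ F (κ ((n:ℝ)+1)) := hFnn _ hκn1.le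
        have hFT : 0 ≤ F (κ T) := hFnn _ hκT.le
        have han : a n = F (κ (n:ℝ)) / ψ (κ (n:ℝ)) := rfl
        have han1 : a (n+1) = F (κ ((n:ℝ)+1)) / ψ (κ ((n:ℝ)+1)) := by
          rw [haDef]
          simp only
          rw [show ((n+1:ℕ):ℝ) = (n:ℝ)+1 by push_cast; ring]
          rfl
        have hrn : r n = ψ (κ (n:ℝ)) / ψ (κ ((n:ℝ)+1)) := rfl
        have hphiT : phiW ψ x (κ T) = F (κ T) / ψ (κ T) := rfl
        have e1 : a n * r n = F (κ (n:ℝ)) / ψ (κ ((n:ℝ)+1)) := by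
          rw [han, hrn]
          field_simp
        have e2 : a (n+1) / r n = F (κ ((n:ℝ)+1)) / ψ (κ (n:ℝ)) := by
          rw [han1, hrn]
          field_simp
        refine ⟨?_, ?_, ?_, ?_, ?_, ?_⟩
        · rw [e1, hphiT]
          exact div_le_div₀ hFT hF1 hpT hψm2
        · rw [e2, hphiT]
          exact div_le_div₀ hFn1 hF2 hp1 hψm1
        · rw [e1, han]
          exact div_le_div₀ hFn le_rfl hp1 (le_trans hψm1 hψm2)
        · rw [e2, han]
          exact div_le_div₀ hFn1 (le_trans hF1 hF2) hp1 le_rfl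
        · rw [e1, han1]
          exact div_le_div₀ hFn1 (le_trans hF1 hF2) hp2 le_rfl
        · rw [e2, han1]
          exact div_le_div₀ hFn1 le_rfl hp1 (le_trans hψm1 hψm2)
      have hunn : ∀ n, 0 ≤ u n := by
        intro n
        rw [huDef]
        simp only
        apply le_min _ (by positivity)
        rcases Nat.eq_zero_or_pos n with rfl | hn
        · rw [ha0]
          have h1 : 0 ≤ a 1 / r 0 := div_nonneg (hann 1) (hrnn 0)
          linarith
        · have hK := hKey n hn (n:ℝ) le_rfl (by linarith)
          linarith [hK.2.2.2.2.1, hK.2.2.2.2.2]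
      have huM : ∀ n, u n ≤ 2*M := fun n => min_le_right _ _
      have hubdd : IsBddSeq u := ⟨2*M, fun n => abs_le.mpr ⟨by linarith [hunn n, hMnn], huM n⟩⟩
      have habdd : IsBddSeq a := ⟨M, fun n => abs_le.mpr ⟨by linarith [hann n], haM n⟩⟩
      have hrbdd : IsBddSeq r := ⟨1, fun n => abs_le.mpr ⟨by linarith [hrnn n], hr1 n⟩⟩
      have hdbdd : IsBddSeq d := by
        rw [hdDef]
        exact BddAdd (BddComp hubdd (fun n => n - 1)) hubdd
      have hu_le : ∀ n, u n ≤ (a (n+1) - a n) + 8*M*(1 - r n) := by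
        intro n
        have h1 : 0 ≤ a (n+1) := hann _
        have h2 : a n ≤ M := haM _
        have h2' : 0 ≤ a n := hann _
        have h4 : a (n+1) ≤ M := haM _
        have h3 : r n ≤ 1 := hr1 n
        have h3' : 0 ≤ r n := hrnn n
        rcases lt_or_ge (r n) (1/2) with hr | hr
        · have hm := min_le_right (a (n+1) / r n - a n * r n) (2*M)
          rw [huDef]
          simp only
          have hp : 0 ≤ M * (1/2 - r n) := mul_nonneg hMnn (by linarith)
          nlinarith
        · have hrpos : 0 < r n := by linarith
          have key : a (n+1) / r n - a n * r n ≤ (a (n+1) - a n) + 8*M*(1 - r n) := by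
            have hdiv : a (n+1) / r n - a n * r n = (a (n+1) - a n * r n * r n) / r n := by
              field_simp
            rw [hdiv, div_le_iff₀ hrpos]
            have hp1 : 0 ≤ (1 - r n) * (M - a (n+1)) :=
              mul_nonneg (by linarith) (by linarith)
            have hp2 : 0 ≤ (1 - r n) * r n * (M - a n) :=
              mul_nonneg (mul_nonneg (by linarith) (by linarith)) (by linarith)
            have hp3 : 0 ≤ M * (7 * r n - 1) * (1 - r n) :=
              mul_nonneg (mul_nonneg hMnn (by linarith)) (by linarith)
            nlinarith
          rw [huDef]
          simp only
          exact le_trans (min_le_left _ _) key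
      have hbound : ∀ t : ℝ, 0 ≤ t →
          |phiW ψ x (κ (max t 1)) - plExt a (max t 1)| ≤ plExt d (max t 1) := by
        intro t ht
        set T := max t 1 with hTdef
        have hT1 : 1 ≤ T := le_max_right _ _
        have hT0 : (0:ℝ) ≤ T := by linarith
        set n := ⌊T⌋₊ with hn
        have hn1 : 1 ≤ n := (Nat.one_le_floor_iff T).mpr hT1
        have hnT : (n:ℝ) ≤ T := Nat.floor_le hT0
        have hTn1' : T < (n:ℝ)+1 := Nat.lt_floor_add_one T
        have hTn1 : T ≤ (n:ℝ)+1 := hTn1'.le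
        have hK := hKey n hn1 T hnT hTn1
        have hplA : plExt a T = a n + (a (n+1) - a n) * (T - n) := plExt_eq_on a n hnT hTn1
        have hplD : plExt d T = d n + (d (n+1) - d n) * (T - n) := plExt_eq_on d n hnT hTn1
        have hθ1 : 0 ≤ T - (n:ℝ) := by linarith
        have hθ2 : T - (n:ℝ) ≤ 1 := by linarith
        have hKlo1 := hK.2.2.1
        have hKlo2 := hK.2.2.2.2.1
        have hKhi1 := hK.2.2.2.1
        have hKhi2 := hK.2.2.2.2.2
        have hθ1' : (0:ℝ) ≤ 1 - (T - (n:ℝ)) := by linarith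
        have hpl_lo : a n * r n ≤ plExt a T := by
          rw [hplA]
          nlinarith [mul_nonneg hθ1' (by linarith : (0:ℝ) ≤ a n - a n * r n),
            mul_nonneg hθ1 (by linarith : (0:ℝ) ≤ a (n+1) - a n * r n)]
        have hpl_hi : plExt a T ≤ a (n+1) / r n := by
          rw [hplA]
          nlinarith [mul_nonneg hθ1' (by linarith : (0:ℝ) ≤ a (n+1) / r n - a n),
            mul_nonneg hθ1 (by linarith : (0:ℝ) ≤ a (n+1) / r n - a (n+1))]
        have hpl_nn : 0 ≤ plExt a T := by
          rw [hplA]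
          nlinarith [mul_nonneg hθ1' (hann n), mul_nonneg hθ1 (hann (n+1))]
        have hpl_M : plExt a T ≤ M := by
          rw [hplA]
          nlinarith [mul_nonneg hθ1' (by linarith [haM n] : (0:ℝ) ≤ M - a n),
            mul_nonneg hθ1 (by linarith [haM (n+1)] : (0:ℝ) ≤ M - a (n+1))]
        have hg_lo := hK.1
        have hg_hi := hK.2.1
        have hg_nn : 0 ≤ phiW ψ x (κ T) := hphinn _ (hκnn _ hT0)
        have hg_M : phiW ψ x (κ T) ≤ M := hphiM _ (hκpos _ (by linarith))
        have habs : |phiW ψ x (κ T) - plExt a T| ≤ u n := by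
          rw [huDef]
          simp only
          apply le_min
          · rw [abs_le]
            constructor <;> linarith
          · rw [abs_le]
            constructor <;> linarith
        have hdn : u n ≤ d n := by
          rw [hdDef]
          simp only
          linarith [hunn (n-1)]
        have hdn1 : u n ≤ d (n+1) := by
          rw [hdDef]
          simp only [Nat.add_sub_cancel]
          linarith [hunn (n+1)]
        have hple : u n ≤ plExt d T := by
          rw [hplD]
          nlinarith [mul_nonneg hθ1' (by linarith : (0:ℝ) ≤ d n - u n),
            mul_nonneg hθ1 (by linarith : (0:ℝ) ≤ d (n+1) - u n)]
        linarith
      have hgIsCb : IsCb (fun t => phiW ψ x (κ (max t 1))) := by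
        constructor
        · have hmax : ContinuousOn (fun t : ℝ => max t 1) (Ici 0) :=
            (continuous_id.max continuous_const).continuousOn
          have hmaps1 : MapsTo (fun t : ℝ => max t 1) (Ici 0) (Ici 0) := fun t _ =>
            mem_Ici.mpr (le_trans zero_le_one (le_max_right t 1))
          have hκcont : ContinuousOn κ (Ici 0) := hκ.2.2.2.2.1.continuousOn
          have hinner : ContinuousOn (fun t : ℝ => κ (max t 1)) (Ici 0) :=
            hκcont.comp hmax hmaps1
          have hmapsin : MapsTo (fun t : ℝ => κ (max t 1)) (Ici 0) (Ioi 0) := fun t _ =>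
            mem_Ioi.mpr (hκpos _ (lt_of_lt_of_le zero_lt_one (le_max_right t 1)))
          have hnum : ContinuousOn (fun t : ℝ => F (κ (max t 1))) (Ici 0) :=
            hFcont.comp_continuousOn hinner
          have hden : ContinuousOn (fun t : ℝ => ψ (κ (max t 1))) (Ici 0) :=
            hψcont.comp hinner hmapsin
          have hdiv : ContinuousOn (fun t : ℝ => F (κ (max t 1)) / ψ (κ (max t 1))) (Ici 0) :=
            hnum.div hden (fun t _ =>
              (psi_pos hψ (hκpos _ (lt_of_lt_of_le zero_lt_one (le_max_right t 1)))).ne')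
          exact hdiv
        · exact ⟨M, fun t _ => by
            rw [abs_of_nonneg (hphinn _ (hκnn _ (le_trans zero_le_one (le_max_right t 1))))]
            exact hphiM _ (hκpos _ (lt_of_lt_of_le zero_lt_one (le_max_right t 1)))⟩
      have hcbP : ∀ b : ℕ → ℝ, IsBddSeq b → IsCb (fun t => plExt b (max t 1)) := by
        rintro b ⟨Mb, hMb⟩
        constructor
        · exact ((continuous_plExt b).comp (continuous_id.max continuous_const)).continuousOn
        · exact ⟨Mb, fun t _ => plExt_abs_le hMb (le_trans zero_le_one (le_max_right t 1))⟩
      set Λ : (ℕ → ℝ) → ℝ := fun b => L.toFun (fun t => plExt b (max t 1)) with hΛdef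
      have hΛadd : ∀ b c : ℕ → ℝ, IsBddSeq b → IsBddSeq c →
          Λ (fun n => b n + c n) = Λ b + Λ c := by
        intro b c hb hc
        rw [hΛdef]
        simp only
        have he : (fun t : ℝ => plExt (fun n => b n + c n) (max t 1)) =
            (fun t => plExt b (max t 1) + plExt c (max t 1)) := by
          funext t
          exact plExt_add b c (max t 1)
        rw [he]
        exact L.map_add _ _ (hcbP b hb) (hcbP c hc)
      have hΛsmul : ∀ (c : ℝ) (b : ℕ → ℝ), IsBddSeq b → Λ (fun n => c * b n) = c * Λ b := by
        intro c b hb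
        rw [hΛdef]
        simp only
        have he : (fun t : ℝ => plExt (fun n => c * b n) (max t 1)) =
            (fun t => c * plExt b (max t 1)) := by
          funext t
          exact plExt_smul c b (max t 1)
        rw [he]
        exact L.map_smul c _ (hcbP b hb)
      have hΛpos : ∀ b : ℕ → ℝ, IsBddSeq b → (∀ n, 0 ≤ b n) → 0 ≤ Λ b := by
        intro b hb hbn
        exact L.pos _ (hcbP b hb) (fun t _ =>
          plExt_nonneg hbn (le_trans zero_le_one (le_max_right t 1)))
      have hΛone : Λ (fun _ => 1) = 1 := by
        rw [hΛdef]
        simp only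
        have he : (fun t : ℝ => plExt (fun _ => (1:ℝ)) (max t 1)) = (fun _ : ℝ => (1:ℝ)) := by
          funext t
          exact plExt_const 1 (max t 1)
        rw [he]
        exact L.map_one
      have hΛshift : ∀ b : ℕ → ℝ, IsBddSeq b → Λ (fun n => b (n + 1)) = Λ b := by
        intro b hb
        rw [hΛdef]
        simp only
        have hf : IsCb (fun t => plExt b (max t 1)) := hcbP b hb
        have h2 := L.shift_inv _ hf 1 zero_le_one
        rw [← h2]
        apply BL_congr_Ici L (hcbP _ (BddComp hb (fun n => n + 1)))
          (IsCbShift hf zero_le_one) zero_le_one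
        intro t ht
        rw [max_eq_left (by linarith : (1:ℝ) ≤ t), max_eq_left (by linarith : (1:ℝ) ≤ t + 1)]
        exact plExt_succ b (by linarith)
      set L' : BanachLimitN := ⟨Λ, hΛadd, hΛsmul, hΛpos, hΛone, hΛshift⟩ with hL'def
      have hrseq : Λ r = 1 := hR L'
      have hΛu_nonneg : 0 ≤ Λ u := hΛpos u hubdd hunn
      have hΛs : Λ (fun n => a (n+1) - a n) = 0 := by
        have hsub := BLN_sub L' (BddComp habdd (fun n => n + 1)) habdd
        have hshift := hΛshift a habdd
        rw [show L'.toFun = Λ from rfl] at hsub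
        rw [hsub, hshift, sub_self]
      have hΛrest : Λ (fun n => (a (n+1) - a n) + 8*M*(1 - r n)) = 0 := by
        rw [hΛadd _ _ (BddSub (BddComp habdd (fun n => n + 1)) habdd)
          (BddSmul (8*M) (BddSub (BddConst 1) hrbdd))]
        rw [hΛs, hΛsmul (8*M) _ (BddSub (BddConst 1) hrbdd)]
        have h1r := BLN_sub L' (BddConst 1) hrbdd
        rw [show L'.toFun = Λ from rfl] at h1r
        rw [h1r]
        have hone := BLN_const L' 1
        rw [show L'.toFun = Λ from rfl] at hone
        rw [hone, hrseq]
        ring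
      have hΛu_le : Λ u ≤ 0 := by
        have hm := BLN_mono L' hubdd
          (BddAdd (BddSub (BddComp habdd (fun n => n + 1)) habdd)
            (BddSmul (8*M) (BddSub (BddConst 1) hrbdd))) hu_le
        rw [show L'.toFun = Λ from rfl] at hm
        rw [hΛrest] at hm
        exact hm
      have hΛu0 : Λ u = 0 := le_antisymm hΛu_le hΛu_nonneg
      have hΛd : Λ d = 0 := by
        have he : Λ d = Λ (fun n => u (n - 1) + u n) := by rw [hdDef]
        rw [he, hΛadd _ _ (BddComp hubdd (fun n => n - 1)) hubdd]
        have hsh := hΛshift (fun n => u (n - 1)) (BddComp hubdd (fun n => n - 1))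
        simp only [Nat.add_sub_cancel] at hsh
        rw [← hsh, hΛu0]
        ring
      have hPcb : IsCb (fun t => plExt a (max t 1)) := hcbP a habdd
      have hDcb : IsCb (fun t => plExt d (max t 1)) := hcbP d hdbdd
      have htcb : IsCb (fun t => phiW ψ x (κ (max t 1)) - plExt a (max t 1)) :=
        IsCbSub hgIsCb hPcb
      have h1 : L.toFun (fun t => phiW ψ x (κ (max t 1)) - plExt a (max t 1)) ≤ Λ d := by
        apply BL_mono L htcb hDcb
        intro t ht
        exact le_trans (le_abs_self _) (hbound t ht)
      have h2 : L.toFun (fun t => plExt a (max t 1) - phiW ψ x (κ (max t 1))) ≤ Λ d := by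
        apply BL_mono L (IsCbSub hPcb hgIsCb) hDcb
        intro t ht
        have hb := hbound t ht
        have := neg_abs_le (phiW ψ x (κ (max t 1)) - plExt a (max t 1))
        linarith
      have e1 := BL_sub L hgIsCb hPcb
      have e2 := BL_sub L hPcb hgIsCb
      rw [e1] at h1
      rw [e2] at h2
      rw [e1]
      rw [hΛd] at h1 h2
      linarith
    · push_neg at hInt
      obtain ⟨c, hc, hnc⟩ := hInt
      apply degenerate_case ψ κ x hκ0 hκnn _ L
      intro e he
      rcases eq_or_lt_of_le he with rfl | he'
      · exact intervalIntegral.integral_same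
      · apply intervalIntegral.integral_undef
        intro hIe
        rcases le_or_gt c e with h | h
        · refine hnc (hIe.mono_set (uIcc_subset_uIcc left_mem_uIcc ?_))
          rw [uIcc_of_le he'.le]
          exact ⟨hc.le, h⟩
        · exact hnc (hIe.trans (hIntMid e c he' h.le))
  · push_neg at hS
    obtain ⟨τ₁, hτ₁, hSe⟩ := hS
    have hallempty : ∀ (τ s : ℝ), 0 ≤ s →
        ¬ (volume {u : ℝ | 0 ≤ u ∧ s < |x u|} ≤ ENNReal.ofReal τ) := by
      intro τ s hs hle
      have hfin : volume {u : ℝ | 0 ≤ u ∧ s < |x u|} ≠ ⊤ :=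
        ne_top_of_le_ne_top ENNReal.ofReal_ne_top hle
      obtain ⟨s', hs'1, hs'2⟩ := measure_tail_small hxmeas hs hfin hτ₁
      exact absurd hs'2 (not_le.mpr (hSe s' hs'1))
    have hxstar : ∀ t : ℝ, decRearr x t = 0 := by
      intro t
      have hE : {s : ℝ | 0 ≤ s ∧ volume {u : ℝ | 0 ≤ u ∧ s < |x u|} ≤ ENNReal.ofReal t} = ∅ := by
        ext s
        simp only [mem_setOf_eq, mem_empty_iff_false, iff_false, not_and]
        exact fun hs => hallempty t s hs
      rw [decRearr, hE, Real.sInf_empty]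
    apply degenerate_case ψ κ x hκ0 hκnn _ L
    intro e _
    have : ∀ s ∈ uIcc (0:ℝ) e, decRearr x s = (fun _ => (0:ℝ)) s := fun s _ => hxstar s
    rw [intervalIntegral.integral_congr this]
    simp
end APL


/-- for `κ ∈ R(ψ)` and `x ∈ M₊(ψ)`, the function `φ_κ(x)` is
almost piecewise linear at infinity: `L(φ_κ(x) − p({φ_κ(x)(n)}ₙ)) = 0` for
every Banach limit `L` on `C_b([0,∞))`. -/
theorem phiKappa_almost_piecewise_linear (ψ κ : ℝ → ℝ) (hψ : OmegaInf ψ)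
    (hκ : MemK κ) (hR : RestrictedGrowth ψ κ)
    (x : ℝ → ℝ) (hx : MemMplus ψ x) (L : BanachLimitR) :
    L.toFun (fun t =>
      phiW ψ x (κ (max t 1)) - plExt (fun n => phiW ψ x (κ (n:ℝ))) (max t 1)) = 0 :=
  APL.main ψ κ hψ hκ hR x hx L
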